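/- arXiv:2009.14557 — 2 statements merged into one kernel-verified Lean document; each statement's English description precedes it below -/
import Mathlib

section
/- Let I ⊆ ℝ̄[x₀,…,xₙ] be a homogeneous tropical ideal and ≺ a monomial term order. Then the Hilbert function of the monomial initial ideal in_≺(I) equals the Hilbert function of I: for all d ≥ 0, H_{in_≺(I)}(d) = H_I(d). -/
open scoped Classical
open Filter

noncomputable section

namespace TropStmt

/-- The tropical semiring of coefficients: `ℝ ∪ {∞}`, with `⊕ = min` and `⊙ = +`. -/
abbrev TR : Type := WithTop ℝ

/-- A tropical polynomial with monomials indexed by `M`, given by its coefficient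
function.  The coefficient `⊤ = ∞` means the monomial does not occur. -/
abbrev TPoly (M : Type) : Type := M → TR

section Generic

variable {M : Type} [AddCommMonoid M]

/-- The support of a tropical polynomial: monomials with coefficient `≠ ∞`. -/
def psupp (f : TPoly M) : Set M := {u | f u ≠ ⊤}

/-- The zero tropical polynomial (all coefficients `∞`). -/
def zeroPoly (M : Type) : TPoly M := fun _ => ⊤

/-- Tropical addition of polynomials: coefficientwise minimum. -/
def tadd (f g : TPoly M) : TPoly M := fun u => min (f u) (g u)

/-- Tropical multiplication of a polynomial `f` by the term `c ⊙ x^v`. -/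
def tmulTerm (c : TR) (v : M) (f : TPoly M) : TPoly M :=
  fun u => if h : ∃ t : M, t + v = u then c + f h.choose else ⊤

/-- An ideal in the semiring of tropical polynomials (with finite supports):
closed under tropical addition and multiplication by terms. -/
def IsTIdeal (I : Set (TPoly M)) : Prop :=
  (∀ f ∈ I, (psupp f).Finite) ∧ zeroPoly M ∈ I ∧
    (∀ f ∈ I, ∀ g ∈ I, tadd f g ∈ I) ∧
    ∀ f ∈ I, ∀ (c : TR) (v : M), tmulTerm c v f ∈ I

/-- `Elim h f g u`: `h` is an elimination of the monomial `x^u` from `f` and `g`: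
`[h]_u = ∞`, `[h]_v ≥ min([f]_v, [g]_v)` for all `v`, with equality whenever
`[f]_v ≠ [g]_v`. -/
def Elim (h f g : TPoly M) (u : M) : Prop :=
  h u = ⊤ ∧ ∀ v : M, min (f v) (g v) ≤ h v ∧ (f v ≠ g v → h v = min (f v) (g v))

/-- A tropical ideal: an ideal satisfying the monomial elimination axiom. -/
def IsTropIdeal (I : Set (TPoly M)) : Prop :=
  IsTIdeal I ∧
    ∀ f ∈ I, ∀ g ∈ I, ∀ u : M, f u = g u → f u ≠ ⊤ → ∃ h ∈ I, Elim h f g u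

/-- The ideal generated by a set of tropical polynomials. -/
def idealGen (S : Set (TPoly M)) : Set (TPoly M) := ⋂₀ {I | IsTIdeal I ∧ S ⊆ I}

/-- The monomial `x^u` (as a tropical polynomial, with coefficient `0`). -/
def monPoly (u : M) : TPoly M := fun v => if v = u then (0 : TR) else ⊤

end Generic

section Vars

variable {n m : ℕ}

/-- Embedding of polynomials into Laurent polynomials. -/
def embed (f : TPoly (Fin n → ℕ)) : TPoly (Fin n → ℤ) :=
  fun u => if h : ∃ v : Fin n → ℕ, (fun i => ((v i : ℤ))) = u then f h.choose else ⊤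

/-- Multiplication of a Laurent polynomial by the Laurent monomial `x^v`. -/
def shiftZ (v : Fin n → ℤ) (f : TPoly (Fin n → ℤ)) : TPoly (Fin n → ℤ) :=
  fun u => f (u - v)

/-- The ideal generated in the Laurent polynomial semiring by an ideal of the
polynomial semiring: its elements are the Laurent-monomial multiples `x^v ⊙ f`, `f ∈ I`. -/
def Lext (I : Set (TPoly (Fin n → ℕ))) : Set (TPoly (Fin n → ℤ)) :=
  {g | ∃ f ∈ I, ∃ v : Fin n → ℤ, g = shiftZ v (embed f)}

/-- The intersection of a Laurent ideal with the polynomial subsemiring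
`ℝ̄[x₁,…,xₙ]`, viewed as a set of (ℕ-exponent) polynomials. -/
def restrictPoly (I : Set (TPoly (Fin n → ℤ))) : Set (TPoly (Fin n → ℕ)) :=
  {f | embed f ∈ I}

def dotZ (w : Fin n → ℝ) (u : Fin n → ℤ) : ℝ := ∑ i, w i * (u i : ℝ)

def dotN (w : Fin n → ℝ) (u : Fin n → ℕ) : ℝ := ∑ i, w i * (u i : ℝ)

/-- `attainsZ w f u`: the monomial `u` occurs in `f` and attains the minimum in the
tropical evaluation of `f` at `w`. -/
def attainsZ (w : Fin n → ℝ) (f : TPoly (Fin n → ℤ)) (u : Fin n → ℤ) : Prop :=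
  f u ≠ ⊤ ∧ ∀ v : Fin n → ℤ, f u + ((dotZ w u : ℝ) : TR) ≤ f v + ((dotZ w v : ℝ) : TR)

def attainsN (w : Fin n → ℝ) (f : TPoly (Fin n → ℕ)) (u : Fin n → ℕ) : Prop :=
  f u ≠ ⊤ ∧ ∀ v : Fin n → ℕ, f u + ((dotN w u : ℝ) : TR) ≤ f v + ((dotN w v : ℝ) : TR)

/-- The support of the initial form `in_w(f)` of a Laurent polynomial, a Boolean
polynomial represented by its set of monomials. -/
def inSuppZ (w : Fin n → ℝ) (f : TPoly (Fin n → ℤ)) : Set (Fin n → ℤ) := {u | attainsZ w f u}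

def inSuppN (w : Fin n → ℝ) (f : TPoly (Fin n → ℕ)) : Set (Fin n → ℕ) := {u | attainsN w f u}

/-- The initial ideal `in_w(I)` of a Laurent tropical ideal, represented as the set of
supports of the (Boolean) initial forms of elements of `I`. -/
def inIdealZ (I : Set (TPoly (Fin n → ℤ))) (w : Fin n → ℝ) : Set (Set (Fin n → ℤ)) :=
  {S | ∃ f ∈ I, S = inSuppZ w f}

def inIdealN (I : Set (TPoly (Fin n → ℕ))) (w : Fin n → ℝ) : Set (Set (Fin n → ℕ)) :=
  {S | ∃ f ∈ I, S = inSuppN w f}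

/-- The tropical variety of a Laurent tropical ideal: points where every nonzero
element attains its minimum at least twice. -/
def trvarietyZ (I : Set (TPoly (Fin n → ℤ))) : Set (Fin n → ℝ) :=
  {w | ∀ f ∈ I, (∀ u, f u = ⊤) ∨ ∃ u v, u ≠ v ∧ attainsZ w f u ∧ attainsZ w f v}

/-- `attainsB w S u`: in the Boolean polynomial with support `S`, the monomial `u`
attains the minimum at `w`. -/
def attainsB (w : Fin n → ℝ) (S : Set (Fin n → ℤ)) (u : Fin n → ℤ) : Prop :=
  u ∈ S ∧ ∀ v ∈ S, dotZ w u ≤ dotZ w v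

/-- Support of the initial form of a Boolean polynomial (given by its support `S`). -/
def inSuppB (w : Fin n → ℝ) (S : Set (Fin n → ℤ)) : Set (Fin n → ℤ) := {u | attainsB w S u}

/-- Variety of a Boolean (support-set) ideal. -/
def BvarietyZ (J : Set (Set (Fin n → ℤ))) : Set (Fin n → ℝ) :=
  {w | ∀ S ∈ J, S = ∅ ∨ ∃ u v, u ≠ v ∧ attainsB w S u ∧ attainsB w S v}

/-- A monomial term order on `ℝ̄[x₁,…,xₙ]` (as a strict order relation `r`, where
`r u v` means `x^u ≺ x^v`).  Note `x^0 = 1` is the largest monomial. -/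
structure IsTermOrder (n : ℕ) (r : (Fin n → ℕ) → (Fin n → ℕ) → Prop) : Prop where
  irrefl : ∀ u, ¬ r u u
  trans : ∀ u v w, r u v → r v w → r u w
  total : ∀ u v, u ≠ v → r u v ∨ r v u
  add_invariant : ∀ u v t, r u v → r (u + t) (v + t)
  lt_one : ∀ u, u ≠ 0 → r u 0

/-- `u` is the `r`-initial monomial of `f`: the `r`-smallest monomial in the support. -/
def isInitialMon (r : (Fin n → ℕ) → (Fin n → ℕ) → Prop) (f : TPoly (Fin n → ℕ))
    (u : Fin n → ℕ) : Prop :=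
  f u ≠ ⊤ ∧ ∀ v, f v ≠ ⊤ → v ≠ u → r u v

/-- The set of monomials of the monomial initial ideal `in_≺(I)`: all monomial
multiples of initial monomials of elements of `I`. -/
def monInitialSet (r : (Fin n → ℕ) → (Fin n → ℕ) → Prop) (I : Set (TPoly (Fin n → ℕ))) :
    Set (Fin n → ℕ) :=
  {u | ∃ g ∈ I, ∃ v, isInitialMon r g v ∧ ∃ t, u = v + t}

/-- Total degree of a monomial. -/
def totdeg (u : Fin m → ℕ) : ℕ := ∑ i, u i

/-- `E` is an independent set for (the matroids of) `I`: it does not contain the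
support of any nonzero polynomial of `I`. -/
def indepFinset (I : Set (TPoly (Fin m → ℕ))) (E : Finset (Fin m → ℕ)) : Prop :=
  ∀ f ∈ I, (∃ u, f u ≠ ⊤) → ¬ (psupp f ⊆ ↑E)

/-- `hilbAt I d N`: the Hilbert function of the homogeneous tropical ideal `I` takes
the value `N` at degree `d`, i.e. `N` is the maximum size of a set of degree-`d`
monomials not containing the support of any polynomial of `I`. -/
def hilbAt (I : Set (TPoly (Fin m → ℕ))) (d N : ℕ) : Prop :=
  (∃ E : Finset (Fin m → ℕ), (∀ u ∈ E, totdeg u = d) ∧ indepFinset I E ∧ E.card = N) ∧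
    ∀ E : Finset (Fin m → ℕ), (∀ u ∈ E, totdeg u = d) → indepFinset I E → E.card ≤ N

/-- The degree-`d` homogeneous part of a tropical polynomial. -/
def homPart (f : TPoly (Fin m → ℕ)) (d : ℕ) : TPoly (Fin m → ℕ) :=
  fun u => if totdeg u = d then f u else ⊤

/-- A homogeneous tropical ideal. -/
def IsHomogTropIdeal (I : Set (TPoly (Fin m → ℕ))) : Prop :=
  IsTropIdeal I ∧ ∀ f ∈ I, ∀ d : ℕ, homPart f d ∈ I

/-- The (total) degree of a tropical polynomial. -/
def polyDeg (f : TPoly (Fin m → ℕ)) : ℕ := sSup (totdeg '' psupp f)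

/-- The homogenization of a tropical polynomial, using a new variable `x₀`. -/
def homogenize (f : TPoly (Fin m → ℕ)) : TPoly (Fin (m + 1) → ℕ) :=
  fun v => if v 0 + totdeg (fun i : Fin m => v i.succ) = polyDeg f
    then f (fun i : Fin m => v i.succ) else ⊤

/-- The homogenization of a tropical ideal. -/
def homogIdeal (I : Set (TPoly (Fin m → ℕ))) : Set (TPoly (Fin (m + 1) → ℕ)) :=
  idealGen (homogenize '' I)

/-- `dimAgrees I p`: `p` is the Hilbert polynomial of the homogenization of `I`,
i.e. the Hilbert function of `I^h` eventually agrees with `p`.  The dimension of the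
tropical ideal `I` is the degree of such a `p`. -/
def dimAgrees (I : Set (TPoly (Fin m → ℕ))) (p : Polynomial ℝ) : Prop :=
  ∀ᶠ d in atTop, ∃ N : ℕ, hilbAt (homogIdeal I) d N ∧ (N : ℝ) = p.eval (d : ℝ)

/-- Specialization of the last variable `x_{n+1} = a` of a tropical polynomial. -/
def specLast (a : ℝ) (f : TPoly (Fin (n + 1) → ℕ)) : TPoly (Fin n → ℕ) :=
  fun u => sInf {t : TR | ∃ k : ℕ, t = f (Fin.snoc u k) + k • ((a : ℝ) : TR)}

/-- Specialization of the `y`-variables at a point `a ∈ ℝ̄^m`. -/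
def specializeY (a : Fin m → TR) (f : TPoly ((Fin n → ℕ) × (Fin m → ℕ))) :
    TPoly (Fin n → ℕ) :=
  fun u => sInf {t : TR | ∃ v : Fin m → ℕ, t = f (u, v) + ∑ i, v i • a i}

/-- Dehomogenization: substitute `x₀ = 0` (the tropical multiplicative unit). -/
def dehom (f : TPoly (Fin (n + 1) → ℕ)) : TPoly (Fin n → ℕ) :=
  fun u => sInf {t : TR | ∃ k : ℕ, t = f (Fin.cons k u)}

/-- The trivialization of a tropical polynomial: all finite coefficients become `0`. -/
def phiBool (f : TPoly (Fin (n + 1) → ℕ)) : TPoly (Fin (n + 1) → ℕ) :=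
  fun u => if f u = ⊤ then (⊤ : TR) else 0

/-- Independence of a finite set of Laurent monomials relative to a Laurent ideal. -/
def LindepFinset (I : Set (TPoly (Fin n → ℤ))) (E : Finset (Fin n → ℤ)) : Prop :=
  ∀ f ∈ I, (∃ u, f u ≠ ⊤) → ¬ (psupp f ⊆ ↑E)

/-- `LdegIs I d`: the zero-dimensional Laurent tropical ideal `I` has degree `d`:
`d` is the maximal size of a finite set of monomials not containing the support
of any nonzero element of `I`. -/
def LdegIs (I : Set (TPoly (Fin n → ℤ))) (d : ℕ) : Prop :=
  (∃ E : Finset (Fin n → ℤ), LindepFinset I E ∧ E.card = d) ∧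
    ∀ E : Finset (Fin n → ℤ), LindepFinset I E → E.card ≤ d

/-- A Laurent tropical ideal is zero-dimensional if the sizes of independent sets of
monomials are bounded. -/
def IsZeroDimL (I : Set (TPoly (Fin n → ℤ))) : Prop :=
  ∃ N : ℕ, ∀ E : Finset (Fin n → ℤ), LindepFinset I E → E.card ≤ N

def BindepFinset (J : Set (Set (Fin n → ℤ))) (E : Finset (Fin n → ℤ)) : Prop :=
  ∀ S ∈ J, S.Nonempty → ¬ (S ⊆ ↑E)

/-- Degree of a zero-dimensional Boolean (support-set) ideal. -/
def BdegIs (J : Set (Set (Fin n → ℤ))) (d : ℕ) : Prop :=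
  (∃ E : Finset (Fin n → ℤ), BindepFinset J E ∧ E.card = d) ∧
    ∀ E : Finset (Fin n → ℤ), BindepFinset J E → E.card ≤ d

/-- A Laurent monomial `u` has degree zero for the grading induced by the subspace `L`. -/
def degZero (L : Submodule ℝ (Fin n → ℝ)) (u : Fin n → ℤ) : Prop :=
  ∀ v ∈ L, (∑ i, v i * (u i : ℝ)) = 0

/-- Degree of the degree-zero part (for the grading induced by `L`) of a Boolean
support-set ideal `J`: the maximal size of a finite set of degree-zero monomials not
containing the support of any nonempty element of the degree-zero part of `J`. -/
def Bdeg0Is (J : Set (Set (Fin n → ℤ))) (L : Submodule ℝ (Fin n → ℝ)) (d : ℕ) : Prop :=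
  (∃ E : Finset (Fin n → ℤ), (∀ u ∈ E, degZero L u) ∧
      (∀ S ∈ J, (∀ u ∈ S, degZero L u) → S.Nonempty → ¬ (S ⊆ ↑E)) ∧ E.card = d) ∧
    ∀ E : Finset (Fin n → ℤ), (∀ u ∈ E, degZero L u) →
      (∀ S ∈ J, (∀ u ∈ S, degZero L u) → S.Nonempty → ¬ (S ⊆ ↑E)) → E.card ≤ d

/-- An `ℝ`-rational polyhedron: defined by finitely many inequalities with integral
normal vectors and real constants. -/
def IsRatPolyhedron (P : Set (Fin n → ℝ)) : Prop :=
  ∃ (k : ℕ) (a : Fin k → Fin n → ℤ) (b : Fin k → ℝ),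
    P = {x | ∀ i, (∑ j, (a i j : ℝ) * x j) ≤ b i}

/-- `F` is a face of the polyhedron `P`. -/
def IsFaceOf (F P : Set (Fin n → ℝ)) : Prop :=
  F = P ∨ ∃ (a : Fin n → ℝ) (b : ℝ), (∀ x ∈ P, (∑ i, a i * x i) ≤ b) ∧
    F = {x | x ∈ P ∧ (∑ i, a i * x i) = b}

/-- The linear span of the directions of a subset of `ℝⁿ`. -/
def spanDirs (σ : Set (Fin n → ℝ)) : Submodule ℝ (Fin n → ℝ) :=
  Submodule.span ℝ {y | ∃ p ∈ σ, ∃ q ∈ σ, y = p - q}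

/-- The dimension of a polyhedron. -/
def pdim (σ : Set (Fin n → ℝ)) : ℕ := Module.finrank ℝ (spanDirs σ)

/-- `u ∈ ℤⁿ` is primitive modulo the subspace `L`: it is a first lattice point, i.e.
nonzero and not a `k`-th multiple (`k ≥ 2`) of a lattice vector modulo `L`. -/
def PrimitiveMod (L : Submodule ℝ (Fin n → ℝ)) (u : Fin n → ℤ) : Prop :=
  (fun i => (u i : ℝ)) ∉ L ∧
    ∀ k : ℕ, 2 ≤ k → ∀ v : Fin n → ℤ, (fun i => (u i : ℝ) - (k : ℝ) * (v i : ℝ)) ∉ L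

/-- `hasDisk S d`: `S` contains a `d`-dimensional disk around some point. -/
def hasDisk (S : Set (Fin n → ℝ)) (d : ℕ) : Prop :=
  ∃ (x : Fin n → ℝ) (W : Submodule ℝ (Fin n → ℝ)), Module.finrank ℝ W = d ∧
    ∃ ε > (0 : ℝ), ∀ y ∈ W, ‖y‖ < ε → x + y ∈ S

/-- The monomial map `φ* : x^u ↦ y^{Au}` on Laurent tropical polynomials. -/
def phiMap (A : Matrix (Fin n) (Fin n) ℤ) (f : TPoly (Fin n → ℤ)) : TPoly (Fin n → ℤ) :=
  fun v => if h : ∃ u : Fin n → ℤ, A.mulVec u = v then f h.choose else ⊤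

end Vars

section Product

variable {n m : ℕ}

def attainsP (x : (Fin n → ℝ) × (Fin m → ℝ)) (f : TPoly ((Fin n → ℤ) × (Fin m → ℤ)))
    (p : (Fin n → ℤ) × (Fin m → ℤ)) : Prop :=
  f p ≠ ⊤ ∧ ∀ q : (Fin n → ℤ) × (Fin m → ℤ),
    f p + ((dotZ x.1 p.1 + dotZ x.2 p.2 : ℝ) : TR) ≤ f q + ((dotZ x.1 q.1 + dotZ x.2 q.2 : ℝ) : TR)

def trvarietyP (I : Set (TPoly ((Fin n → ℤ) × (Fin m → ℤ)))) :
    Set ((Fin n → ℝ) × (Fin m → ℝ)) :=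
  {x | ∀ f ∈ I, (∀ p, f p = ⊤) ∨ ∃ p q, p ≠ q ∧ attainsP x f p ∧ attainsP x f q}

end Product

section Univariate

def attains1 (x : ℝ) (f : TPoly ℤ) (u : ℤ) : Prop :=
  f u ≠ ⊤ ∧ ∀ v : ℤ, f u + (((u : ℝ) * x : ℝ) : TR) ≤ f v + (((v : ℝ) * x : ℝ) : TR)

def inSupp1 (x : ℝ) (f : TPoly ℤ) : Set ℤ := {u | attains1 x f u}

def trvariety1 (I : Set (TPoly ℤ)) : Set ℝ :=
  {x | ∀ f ∈ I, (∀ u, f u = ⊤) ∨ ∃ u v, u ≠ v ∧ attains1 x f u ∧ attains1 x f v}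

/-- The variety of a single univariate Laurent tropical polynomial. -/
def Vf (h : TPoly ℤ) : Set ℝ :=
  {x | (∀ u, h u = ⊤) ∨ ∃ u v, u ≠ v ∧ attains1 x h u ∧ attains1 x h v}

/-- Evaluation of a univariate Laurent tropical polynomial at `x ∈ ℝ`. -/
def eval1 (f : TPoly ℤ) (x : ℝ) : TR := sInf {t : TR | ∃ u : ℤ, t = f u + (((u : ℝ) * x : ℝ) : TR)}

/-- `g` is the convexification of `f`: it defines the same function and has the
(pointwise) minimal coefficients among all such polynomials. -/
def IsLConv (f g : TPoly ℤ) : Prop :=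
  (∀ x : ℝ, eval1 g x = eval1 f x) ∧
    ∀ h : TPoly ℤ, (∀ x : ℝ, eval1 h x = eval1 f x) → ∀ u, g u ≤ h u

/-- Tropical multiplication of univariate Laurent polynomials. -/
def pmulZ (f g : TPoly ℤ) : TPoly ℤ :=
  fun u => sInf {t : TR | ∃ i j : ℤ, i + j = u ∧ t = f i + g j}

def unit1 : TPoly ℤ := monPoly (0 : ℤ)

def powZ (f : TPoly ℤ) : ℕ → TPoly ℤ
  | 0 => unit1
  | (k + 1) => pmulZ f (powZ f k)

/-- The linear tropical polynomial `x ⊕ w`. -/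
def lin1 (w : ℝ) : TPoly ℤ :=
  fun u => if u = 0 then ((w : ℝ) : TR) else if u = 1 then (0 : TR) else ⊤

/-- Tropical divisibility of univariate Laurent polynomials. -/
def LDvd (f g : TPoly ℤ) : Prop := ∃ q : TPoly ℤ, (psupp q).Finite ∧ g = pmulZ f q

/-- `in_w(f)` is a Boolean polynomial lying in `𝔹[x]` of degree `m`. -/
def goodAt (x : ℝ) (f : TPoly ℤ) (m : ℕ) : Prop :=
  (m : ℤ) ∈ inSupp1 x f ∧ ∀ u ∈ inSupp1 x f, 0 ≤ u ∧ u ≤ (m : ℤ)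

/-- The multiplicity of `V(I)` at `x`: the smallest degree of a Boolean polynomial in
`in_x(I) ∩ 𝔹[x]`. -/
def idealMult1 (I : Set (TPoly ℤ)) (x : ℝ) (m : ℕ) : Prop :=
  (∃ f ∈ I, goodAt x f m) ∧ ∀ f ∈ I, ∀ m' : ℕ, goodAt x f m' → m ≤ m'

/-- The multiplicity of a univariate tropical polynomial `h` at `w`: the exponent of
the factor `(x ⊕ w)` in the factorization of the convexification of `h`. -/
def polyMult1 (h : TPoly ℤ) (w : ℝ) (m : ℕ) : Prop :=
  ∃ ch : TPoly ℤ, IsLConv h ch ∧ LDvd (powZ (lin1 w) m) ch ∧ ¬ LDvd (powZ (lin1 w) (m + 1)) ch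

end Univariate


namespace TropHilb

open TropStmt

section Aux

variable {m : ℕ}

lemma pi_add_right_cancel {a b t : Fin m → ℕ} (h : a + t = b + t) : a = b := by
  funext i
  have := congrFun h i
  simpa using Nat.add_right_cancel this

lemma tmulTerm_apply_add (c : TR) (v t : Fin m → ℕ) (f : TPoly (Fin m → ℕ)) :
    tmulTerm c v f (t + v) = c + f t := by
  unfold tmulTerm
  have h : ∃ s : Fin m → ℕ, s + v = t + v := ⟨t, rfl⟩
  rw [dif_pos h]
  congr 1
  exact congrArg f (pi_add_right_cancel h.choose_spec)

lemma tmulTerm_ne_top {c : TR} {v : Fin m → ℕ} {f : TPoly (Fin m → ℕ)} {s : Fin m → ℕ}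
    (hs : tmulTerm c v f s ≠ ⊤) : ∃ t, s = t + v ∧ f t ≠ ⊤ := by
  unfold tmulTerm at hs
  by_cases h : ∃ t : Fin m → ℕ, t + v = s
  · rw [dif_pos h] at hs
    refine ⟨h.choose, h.choose_spec.symm, fun ht => hs ?_⟩
    rw [ht, add_top]
  · rw [dif_neg h] at hs; exact absurd rfl hs

lemma tmulTerm_zero_apply (c : TR) (f : TPoly (Fin m → ℕ)) (s : Fin m → ℕ) :
    tmulTerm c 0 f s = c + f s := by
  have := tmulTerm_apply_add c 0 s f
  rwa [add_zero] at this

lemma totdeg_add (u v : Fin m → ℕ) : totdeg (u + v) = totdeg u + totdeg v := by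
  unfold totdeg
  simp [Finset.sum_add_distrib]

lemma degSet_finite (d : ℕ) : {u : Fin m → ℕ | totdeg u = d}.Finite := by
  apply Set.Finite.subset (Set.Finite.pi (fun _ : Fin m => Set.finite_Iic d))
  intro u hu
  simp only [Set.mem_pi, Set.mem_univ, Set.mem_Iic, forall_true_left]
  intro i
  have h1 : u i ≤ totdeg u :=
    Finset.single_le_sum (f := fun j => u j) (fun j _ => Nat.zero_le _) (Finset.mem_univ i)
  have h2 : totdeg u = d := hu
  omega

lemma exists_rmin {r : (Fin m → ℕ) → (Fin m → ℕ) → Prop} (hr : IsTermOrder m r)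
    (T : Finset (Fin m → ℕ)) : T.Nonempty → ∃ u ∈ T, ∀ v ∈ T, v ≠ u → r u v := by
  induction T using Finset.induction_on with
  | empty => intro h; exact absurd h (by simp)
  | @insert a T haT IH =>
    intro _
    rcases T.eq_empty_or_nonempty with hTe | hTne
    · subst hTe
      refine ⟨a, Finset.mem_insert_self _ _, ?_⟩
      intro v hv hva
      rcases Finset.mem_insert.mp hv with rfl | hvT
      · exact absurd rfl hva
      · exact absurd hvT (Finset.notMem_empty v)
    · obtain ⟨u, huT, hu⟩ := IH hTne
      by_cases hau : a = u
      · subst hau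
        exact absurd huT haT
      · rcases hr.total a u hau with h1 | h2
        · refine ⟨a, Finset.mem_insert_self _ _, ?_⟩
          intro v hv hva
          rcases Finset.mem_insert.mp hv with rfl | hvT
          · exact absurd rfl hva
          · by_cases hvu : v = u
            · subst hvu; exact h1
            · exact hr.trans _ _ _ h1 (hu v hvT hvu)
        · refine ⟨u, Finset.mem_insert_of_mem huT, ?_⟩
          intro v hv hvu
          rcases Finset.mem_insert.mp hv with rfl | hvT
          · exact h2
          · exact hu v hvT hvu

lemma monPoly_ne_top {u s : Fin m → ℕ} (h : monPoly u s ≠ ⊤) : s = u := by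
  by_contra hs
  exact h (by simp [monPoly, hs])

end Aux

section Main

variable {m : ℕ} {r : (Fin m → ℕ) → (Fin m → ℕ) → Prop} {I : Set (TPoly (Fin m → ℕ))}

lemma monInit_add {u : Fin m → ℕ} (hu : u ∈ monInitialSet r I) (t : Fin m → ℕ) :
    u + t ∈ monInitialSet r I := by
  obtain ⟨g, hg, v, hv, t0, rfl⟩ := hu
  exact ⟨g, hg, v, hv, t0 + t, add_assoc v t0 t⟩

/-- Every element of the ideal generated by the initial monomials has support
contained in the monomial initial set. -/
lemma idealGen_supp
    (f : TPoly (Fin m → ℕ))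
    (hf : f ∈ idealGen {g | ∃ u, (∃ f ∈ I, isInitialMon r f u) ∧ g = monPoly u}) :
    psupp f ⊆ monInitialSet r I := by
  set K : Set (TPoly (Fin m → ℕ)) :=
    {f | (psupp f).Finite ∧ psupp f ⊆ monInitialSet r I} with hK
  have hKT : IsTIdeal K := by
    refine ⟨fun f hf => hf.1, ?_, ?_, ?_⟩
    · constructor
      · convert Set.finite_empty
        ext u; simp [psupp, zeroPoly]
      · intro u hu; exact absurd rfl hu
    · intro f hf g hg
      have hsub : psupp (tadd f g) ⊆ psupp f ∪ psupp g := by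
        intro u hu
        rcases min_cases (f u) (g u) with ⟨h1, _⟩ | ⟨h1, _⟩
        · exact Or.inl (by rwa [psupp, Set.mem_setOf_eq, tadd, h1] at hu)
        · exact Or.inr (by rwa [psupp, Set.mem_setOf_eq, tadd, h1] at hu)
      exact ⟨(hf.1.union hg.1).subset hsub,
        hsub.trans (Set.union_subset hf.2 hg.2)⟩
    · intro f hf c v
      have hsub : psupp (tmulTerm c v f) ⊆ (· + v) '' psupp f := by
        intro s hs
        obtain ⟨t, rfl, ht⟩ := tmulTerm_ne_top hs
        exact ⟨t, ht, rfl⟩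
      refine ⟨(hf.1.image _).subset hsub, hsub.trans ?_⟩
      rintro s ⟨t, ht, rfl⟩
      exact monInit_add (hf.2 ht) v
  have hSK : {g | ∃ u, (∃ f ∈ I, isInitialMon r f u) ∧ g = monPoly u} ⊆ K := by
    rintro g ⟨u, ⟨f0, hf0, hu⟩, rfl⟩
    have hsup : psupp (monPoly u) = {u} := by
      ext s
      constructor
      · exact fun h => monPoly_ne_top h
      · rintro rfl
        intro h
        simp [monPoly] at h
    rw [hK, Set.mem_setOf_eq, hsup]
    exact ⟨Set.finite_singleton u,
      Set.singleton_subset_iff.mpr ⟨f0, hf0, u, hu, 0, (add_zero u).symm⟩⟩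
  exact (Set.mem_sInter.mp hf K ⟨hKT, hSK⟩).2

/-- For any monomial in the monomial initial set, the generated ideal contains a
nonzero polynomial supported on exactly that monomial. -/
lemma idealGen_monomial {u : Fin m → ℕ} (hu : u ∈ monInitialSet r I) :
    ∃ p ∈ idealGen {g | ∃ uu, (∃ f ∈ I, isInitialMon r f uu) ∧ g = monPoly uu},
      p u ≠ ⊤ ∧ psupp p ⊆ {u} := by
  obtain ⟨g, hg, v, hv, t, rfl⟩ := hu
  refine ⟨tmulTerm 0 t (monPoly v), ?_, ?_, ?_⟩
  · intro K hK
    obtain ⟨hKT, hSK⟩ := hK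
    exact hKT.2.2.2 _ (hSK ⟨v, ⟨g, hg, hv⟩, rfl⟩) 0 t
  · rw [tmulTerm_apply_add]
    simp [monPoly]
  · intro s hs
    obtain ⟨t0, rfl, ht0⟩ := tmulTerm_ne_top hs
    rw [monPoly_ne_top ht0]
    rfl

/-- From a membership in the monomial initial set in degree `d`, produce a
homogeneous degree-`d` element of `I` with that initial monomial. -/
lemma exists_initial_poly (hr : IsTermOrder m r) (hI : IsHomogTropIdeal I) {u : Fin m → ℕ}
    (hu : u ∈ monInitialSet r I) :
    ∃ f ∈ I, isInitialMon r f u ∧ ∀ s, f s ≠ ⊤ → totdeg s = totdeg u := by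
  obtain ⟨g, hg, v, hv, t, rfl⟩ := hu
  set g' : TPoly (Fin m → ℕ) := homPart g (totdeg v) with hg'
  have hg'I : g' ∈ I := hI.2 g hg (totdeg v)
  have hg'v : g' v = g v := if_pos rfl
  have hg'sup : ∀ s, g' s ≠ ⊤ → g s ≠ ⊤ ∧ totdeg s = totdeg v := by
    intro s hs
    rw [hg'] at hs
    unfold homPart at hs
    by_cases h : totdeg s = totdeg v
    · rw [if_pos h] at hs; exact ⟨hs, h⟩
    · rw [if_neg h] at hs; exact absurd rfl hs
  refine ⟨tmulTerm 0 t g', hI.1.1.2.2.2 g' hg'I 0 t, ⟨?_, ?_⟩, ?_⟩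
  · rw [tmulTerm_apply_add, hg'v, zero_add]
    exact hv.1
  · intro s hs hsu
    obtain ⟨t0, rfl, ht0⟩ := tmulTerm_ne_top hs
    have ht0v : t0 ≠ v := fun h => hsu (by rw [h])
    have : r v t0 := hv.2 t0 (hg'sup t0 ht0).1 ht0v
    exact hr.add_invariant v t0 t this
  · intro s hs
    obtain ⟨t0, rfl, ht0⟩ := tmulTerm_ne_top hs
    rw [totdeg_add, totdeg_add, (hg'sup t0 ht0).2]

end Main

section Core

variable {m : ℕ} {r : (Fin m → ℕ) → (Fin m → ℕ) → Prop} {I : Set (TPoly (Fin m → ℕ))}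

lemma descent (hI : IsHomogTropIdeal I) {d : ℕ}
    (E : Finset (Fin m → ℕ)) (hEdeg : ∀ u ∈ E, totdeg u = d)
    (hEind : indepFinset I E) {u₀ : Fin m → ℕ} (hu₀E : u₀ ∈ E)
    (hcon : ∀ w, totdeg w = d → r u₀ w → w ∉ E →
      ∃ g ∈ I, (∃ s, g s ≠ ⊤) ∧ psupp g ⊆ ↑(insert w (E.erase u₀)))
    (k : ℕ) :
    ∀ f ∈ I, f u₀ ≠ ⊤ → (∀ s, f s ≠ ⊤ → totdeg s = d) →
      (∀ s, f s ≠ ⊤ → s ∉ E → r u₀ s) →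
      ∀ (hfin : (psupp f).Finite), (hfin.toFinset \ E).card ≤ k → False := by
  induction k with
  | zero =>
    intro f hf hfu hfd hfr hfin hcard
    have h0 : hfin.toFinset \ E = ∅ := Finset.card_eq_zero.mp (Nat.le_zero.mp hcard)
    have hsub : psupp f ⊆ ↑E := by
      intro s hs
      have : hfin.toFinset ⊆ E := by rwa [Finset.sdiff_eq_empty_iff_subset] at h0
      exact this (hfin.mem_toFinset.mpr hs)
    exact hEind f hf ⟨u₀, hfu⟩ hsub
  | succ k IH =>
    intro f hf hfu hfd hfr hfin hcard
    by_cases hsub : psupp f ⊆ ↑E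
    · exact hEind f hf ⟨u₀, hfu⟩ hsub
    · obtain ⟨w, hw, hwE⟩ : ∃ w, f w ≠ ⊤ ∧ w ∉ E := by
        rcases Set.not_subset.mp hsub with ⟨w, hw1, hw2⟩
        exact ⟨w, hw1, fun h => hw2 h⟩
      have hwd : totdeg w = d := hfd w hw
      have hwr : r u₀ w := hfr w hw hwE
      have hwu₀ : w ≠ u₀ := fun h => hwE (h ▸ hu₀E)
      obtain ⟨g, hgI, ⟨s₁, hgs₁⟩, hgsupp⟩ := hcon w hwd hwr hwE
      have hgw : g w ≠ ⊤ := by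
        by_contra hgw
        refine hEind g hgI ⟨s₁, hgs₁⟩ ?_
        intro s hs
        have hmem := hgsupp hs
        rw [Finset.coe_insert, Set.mem_insert_iff] at hmem
        rcases hmem with rfl | hmem
        · exact absurd hgw hs
        · exact Finset.mem_coe.mpr (Finset.mem_of_mem_erase (Finset.mem_coe.mp hmem))
      obtain ⟨a, ha⟩ := WithTop.ne_top_iff_exists.mp hw
      obtain ⟨b, hb⟩ := WithTop.ne_top_iff_exists.mp hgw
      set g' : TPoly (Fin m → ℕ) := tmulTerm ((a - b : ℝ) : TR) 0 g with hg'def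
      have hg'I : g' ∈ I := hI.1.1.2.2.2 g hgI _ 0
      have hg'app : ∀ s, g' s = ((a - b : ℝ) : TR) + g s :=
        fun s => tmulTerm_zero_apply _ _ _
      have hg'w : f w = g' w := by
        rw [hg'app, ← hb, ← ha, ← WithTop.coe_add, sub_add_cancel]
      obtain ⟨h, hhI, hhw, hhmin⟩ := hI.1.2 f hf g' hg'I w hg'w hw
      have hg'top : ∀ s, g' s ≠ ⊤ → g s ≠ ⊤ := by
        intro s hs hgs
        rw [hg'app, hgs, add_top] at hs
        exact hs rfl
      have hsupph : ∀ s, h s ≠ ⊤ → f s ≠ ⊤ ∨ g' s ≠ ⊤ := by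
        intro s hs
        by_contra hc
        push_neg at hc
        have hle : min (f s) (g' s) ≤ h s := (hhmin s).1
        rw [hc.1, hc.2, min_self] at hle
        exact hs (top_le_iff.mp hle)
      have hgmem : ∀ s, g s ≠ ⊤ → s = w ∨ s ∈ E := by
        intro s hs
        have hmem := hgsupp hs
        rw [Finset.coe_insert, Set.mem_insert_iff] at hmem
        rcases hmem with rfl | h'
        · exact Or.inl rfl
        · exact Or.inr (Finset.mem_of_mem_erase (Finset.mem_coe.mp h'))
      have hgu₀ : g u₀ = ⊤ := by
        by_contra hgu₀
        have hmem := hgsupp hgu₀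
        rw [Finset.coe_insert, Set.mem_insert_iff] at hmem
        rcases hmem with h' | h'
        · exact hwu₀ h'.symm
        · exact absurd (Finset.mem_coe.mp h') (Finset.notMem_erase u₀ E)
      have hhu₀ : h u₀ ≠ ⊤ := by
        have hne : f u₀ ≠ g' u₀ := by
          rw [hg'app, hgu₀, add_top]; exact hfu
        rw [(hhmin u₀).2 hne, hg'app, hgu₀, add_top, min_eq_left le_top]
        exact hfu
      have hsuppfE : ∀ s, h s ≠ ⊤ → s ∉ E → f s ≠ ⊤ ∧ s ≠ w := by
        intro s hs hsE
        have hsw : s ≠ w := fun h' => hs (h' ▸ hhw)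
        rcases hsupph s hs with h' | h'
        · exact ⟨h', hsw⟩
        · rcases hgmem s (hg'top s h') with rfl | h''
          · exact absurd rfl hsw
          · exact absurd h'' hsE
      have hfinh : (psupp h).Finite := hI.1.1.1 h hhI
      refine IH h hhI hhu₀ ?_ ?_ hfinh ?_
      · intro s hs
        rcases hsupph s hs with h' | h'
        · exact hfd s h'
        · rcases hgmem s (hg'top s h') with rfl | h''
          · exact hwd
          · exact hEdeg s h''
      · intro s hs hsE
        exact hfr s (hsuppfE s hs hsE).1 hsE
      · have hsubf : hfinh.toFinset \ E ⊆ (hfin.toFinset \ E).erase w := by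
          intro s hs
          rw [Finset.mem_sdiff, Set.Finite.mem_toFinset] at hs
          obtain ⟨hf1, hsw⟩ := hsuppfE s hs.1 hs.2
          rw [Finset.mem_erase, Finset.mem_sdiff, Set.Finite.mem_toFinset]
          exact ⟨hsw, hf1, hs.2⟩
        have hwmem : w ∈ hfin.toFinset \ E := by
          rw [Finset.mem_sdiff, Set.Finite.mem_toFinset]; exact ⟨hw, hwE⟩
        have h1 := Finset.card_le_card hsubf
        have h2 := Finset.card_erase_of_mem hwmem
        omega

lemma exchange (hr : IsTermOrder m r) (hI : IsHomogTropIdeal I) {d : ℕ}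
    {E : Finset (Fin m → ℕ)} (hEdeg : ∀ u ∈ E, totdeg u = d)
    (hEind : indepFinset I E) {u₀ : Fin m → ℕ} (hu₀E : u₀ ∈ E)
    (hu₀ : u₀ ∈ monInitialSet r I) :
    ∃ w, totdeg w = d ∧ r u₀ w ∧ w ∉ E ∧ indepFinset I (insert w (E.erase u₀)) := by
  by_contra hcon
  push_neg at hcon
  obtain ⟨f, hfI, hfinit, hfdeg⟩ := exists_initial_poly hr hI hu₀
  have hdu₀ : totdeg u₀ = d := hEdeg u₀ hu₀E
  have hfin : (psupp f).Finite := hI.1.1.1 f hfI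
  refine descent (r := r) hI E hEdeg hEind hu₀E ?_ (hfin.toFinset \ E).card f hfI hfinit.1
    ?_ ?_ hfin le_rfl
  · intro w hwd hwr hwE
    have hni := hcon w hwd hwr hwE
    unfold indepFinset at hni
    push_neg at hni
    obtain ⟨g, hgI, hgne, hgsub⟩ := hni
    exact ⟨g, hgI, hgne, hgsub⟩
  · intro s hs; rw [hfdeg s hs]; exact hdu₀
  · intro s hs hsE
    exact hfinit.2 s hs (fun h' => hsE (h' ▸ hu₀E))

/-- Degree-`d` standard monomials: not in the monomial initial set. -/
def stdFin (r : (Fin m → ℕ) → (Fin m → ℕ) → Prop) (I : Set (TPoly (Fin m → ℕ)))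
    (d : ℕ) : Finset (Fin m → ℕ) :=
  ((degSet_finite d).toFinset).filter (fun u => u ∉ monInitialSet r I)

lemma mem_stdFin {d : ℕ} {u : Fin m → ℕ} :
    u ∈ stdFin r I d ↔ totdeg u = d ∧ u ∉ monInitialSet r I := by
  rw [stdFin, Finset.mem_filter, Set.Finite.mem_toFinset]
  rfl

def rho (r : (Fin m → ℕ) → (Fin m → ℕ) → Prop) (d : ℕ) (u : Fin m → ℕ) : ℕ :=
  (((degSet_finite d).toFinset).filter (fun v => r u v)).card

lemma card_le_std (hr : IsTermOrder m r) (hI : IsHomogTropIdeal I) (d : ℕ) :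
    ∀ k : ℕ, ∀ E : Finset (Fin m → ℕ), (∑ u ∈ E, rho r d u) ≤ k →
      (∀ u ∈ E, totdeg u = d) → indepFinset I E → E.card ≤ (stdFin r I d).card := by
  intro k
  induction k using Nat.strong_induction_on with
  | _ k IH =>
  intro E hm hdeg hind
  by_cases hBd : ∀ u ∈ E, u ∉ monInitialSet r I
  · exact Finset.card_le_card (fun u hu => mem_stdFin.mpr ⟨hdeg u hu, hBd u hu⟩)
  · push_neg at hBd
    obtain ⟨u₀, hu₀E, hu₀⟩ := hBd
    obtain ⟨w, hwdeg, hruw, hwE, hind'⟩ := exchange hr hI hdeg hind hu₀E hu₀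
    have hwnotmem : w ∉ E.erase u₀ := fun h => hwE (Finset.mem_of_mem_erase h)
    have hdeg' : ∀ v ∈ insert w (E.erase u₀), totdeg v = d := by
      intro v hv
      rcases Finset.mem_insert.mp hv with rfl | hv
      · exact hwdeg
      · exact hdeg v (Finset.mem_of_mem_erase hv)
    have hcard' : (insert w (E.erase u₀)).card = E.card := by
      rw [Finset.card_insert_of_notMem hwnotmem, Finset.card_erase_of_mem hu₀E]
      have := Finset.card_pos.mpr ⟨u₀, hu₀E⟩
      omega
    have hρlt : rho r d w < rho r d u₀ := by
      have hsub : ((degSet_finite d).toFinset).filter (fun v => r w v) ⊆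
          ((degSet_finite d).toFinset).filter (fun v => r u₀ v) := by
        intro v hv
        rw [Finset.mem_filter] at hv ⊢
        exact ⟨hv.1, hr.trans _ _ _ hruw hv.2⟩
      have hmem : w ∈ ((degSet_finite d).toFinset).filter (fun v => r u₀ v) := by
        rw [Finset.mem_filter, Set.Finite.mem_toFinset]
        exact ⟨hwdeg, hruw⟩
      have hnmem : w ∉ ((degSet_finite d).toFinset).filter (fun v => r w v) := by
        rw [Finset.mem_filter]
        rintro ⟨-, h⟩
        exact hr.irrefl w h
      exact Finset.card_lt_card ((Finset.ssubset_iff_of_subset hsub).mpr ⟨w, hmem, hnmem⟩)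
    have hsumE : ∑ u ∈ E, rho r d u = rho r d u₀ + ∑ u ∈ E.erase u₀, rho r d u :=
      (Finset.add_sum_erase E _ hu₀E).symm
    have hsumE' : ∑ u ∈ insert w (E.erase u₀), rho r d u
        = rho r d w + ∑ u ∈ E.erase u₀, rho r d u := Finset.sum_insert hwnotmem
    have hrec := IH (∑ u ∈ insert w (E.erase u₀), rho r d u) (by omega)
      (insert w (E.erase u₀)) le_rfl hdeg' hind'
    omega

lemma std_deg (d : ℕ) : ∀ u ∈ stdFin r I d, totdeg u = d :=
  fun u hu => (mem_stdFin.mp hu).1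

lemma std_indep_I (hr : IsTermOrder m r) (hI : IsHomogTropIdeal I) (d : ℕ) :
    indepFinset I (stdFin r I d) := by
  intro f hf hne hsub
  obtain ⟨s₀, hs₀⟩ := hne
  have hfin := hI.1.1.1 f hf
  obtain ⟨u, huT, hu⟩ := exists_rmin hr hfin.toFinset ⟨s₀, hfin.mem_toFinset.mpr hs₀⟩
  have huS : u ∈ psupp f := hfin.mem_toFinset.mp huT
  have hinit : isInitialMon r f u :=
    ⟨huS, fun v hv hvu => hu v (hfin.mem_toFinset.mpr hv) hvu⟩
  have humem : u ∈ monInitialSet r I := ⟨f, hf, u, hinit, 0, (add_zero u).symm⟩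
  exact (mem_stdFin.mp (Finset.mem_coe.mp (hsub huS))).2 humem

lemma std_indep_J (d : ℕ) :
    indepFinset (idealGen {g | ∃ u, (∃ f ∈ I, isInitialMon r f u) ∧ g = monPoly u})
      (stdFin r I d) := by
  intro f hf hne hsub
  obtain ⟨s₀, hs₀⟩ := hne
  have h1 : s₀ ∈ monInitialSet r I := idealGen_supp f hf hs₀
  exact (mem_stdFin.mp (Finset.mem_coe.mp (hsub hs₀))).2 h1

lemma J_indep_subset {d : ℕ} {E : Finset (Fin m → ℕ)}
    (hdeg : ∀ u ∈ E, totdeg u = d)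
    (hind : indepFinset
      (idealGen {g | ∃ u, (∃ f ∈ I, isInitialMon r f u) ∧ g = monPoly u}) E) :
    E ⊆ stdFin r I d := by
  intro u huE
  rw [mem_stdFin]
  refine ⟨hdeg u huE, fun humem => ?_⟩
  obtain ⟨p, hpJ, hpu, hpsub⟩ := idealGen_monomial humem
  exact hind p hpJ ⟨u, hpu⟩
    (hpsub.trans (Set.singleton_subset_iff.mpr (Finset.mem_coe.mpr huE)))

end Core

end TropHilb

end TropStmt
theorem hilbert_function_of_monomial_initial_ideal
    (n : ℕ) (I : Set (TropStmt.TPoly (Fin (n + 1) → ℕ)))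
    (hI : TropStmt.IsHomogTropIdeal I)
    (r : (Fin (n + 1) → ℕ) → (Fin (n + 1) → ℕ) → Prop)
    (hr : TropStmt.IsTermOrder (n + 1) r) :
    ∀ d N : ℕ,
      TropStmt.hilbAt
        (TropStmt.idealGen {g | ∃ u, (∃ f ∈ I, TropStmt.isInitialMon r f u) ∧ g = TropStmt.monPoly u})
        d N
      ↔ TropStmt.hilbAt I d N := by
  intro d N
  have hJiff : TropStmt.hilbAt
      (TropStmt.idealGen {g | ∃ u, (∃ f ∈ I, TropStmt.isInitialMon r f u) ∧ g = TropStmt.monPoly u})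
      d N ↔ N = (TropStmt.TropHilb.stdFin r I d).card := by
    constructor
    · rintro ⟨⟨E, hdegE, hindE, hcardE⟩, hmax⟩
      have h1 : E.card ≤ (TropStmt.TropHilb.stdFin r I d).card :=
        Finset.card_le_card (TropStmt.TropHilb.J_indep_subset hdegE hindE)
      have h2 : (TropStmt.TropHilb.stdFin r I d).card ≤ N :=
        hmax _ (TropStmt.TropHilb.std_deg d) (TropStmt.TropHilb.std_indep_J d)
      omega
    · rintro rfl
      exact ⟨⟨TropStmt.TropHilb.stdFin r I d, TropStmt.TropHilb.std_deg d, TropStmt.TropHilb.std_indep_J d, rfl⟩,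
        fun E hdegE hindE =>
          Finset.card_le_card (TropStmt.TropHilb.J_indep_subset hdegE hindE)⟩
  have hIiff : TropStmt.hilbAt I d N ↔ N = (TropStmt.TropHilb.stdFin r I d).card := by
    constructor
    · rintro ⟨⟨E, hdegE, hindE, hcardE⟩, hmax⟩
      have h1 : E.card ≤ (TropStmt.TropHilb.stdFin r I d).card :=
        TropStmt.TropHilb.card_le_std hr hI d _ E le_rfl hdegE hindE
      have h2 : (TropStmt.TropHilb.stdFin r I d).card ≤ N :=
        hmax _ (TropStmt.TropHilb.std_deg d) (TropStmt.TropHilb.std_indep_I hr hI d)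
      omega
    · rintro rfl
      exact ⟨⟨TropStmt.TropHilb.stdFin r I d, TropStmt.TropHilb.std_deg d, TropStmt.TropHilb.std_indep_I hr hI d, rfl⟩,
        fun E hdegE hindE => TropStmt.TropHilb.card_le_std hr hI d _ E le_rfl hdegE hindE⟩
  exact hJiff.trans hIiff.symm
end
end

section
/- Let φ* : ℝ̄[x₁^{±1},…,xₙ^{±1}] → ℝ̄[y₁^{±1},…,yₙ^{±1}] be the semiring homomorphism sending x_i ↦ y^{a_i}, where the n×n integer matrix A with columns a_i has rank n. If J is a zero-dimensional tropical ideal, then the ideal J_φ generated by φ*(J) is a zero-dimensional tropical ideal with deg(J_φ) = |det(A)| · deg(J). -/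
open scoped Classical
open Filter

noncomputable section

namespace TropAux

open TropStmt Matrix

/-! ### cokernel cardinality -/

theorem mulVec_inj {n : ℕ} (A : Matrix (Fin n) (Fin n) ℤ) (hA : A.det ≠ 0) :
    Function.Injective A.mulVec := by
  intro u v huv
  have h1 : A.adjugate *ᵥ (A *ᵥ u) = A.adjugate *ᵥ (A *ᵥ v) := by rw [huv]
  rw [Matrix.mulVec_mulVec, Matrix.mulVec_mulVec, Matrix.adjugate_mul] at h1
  have h2 : A.det • u = A.det • v := by
    simpa [Matrix.smul_mulVec, Matrix.one_mulVec] using h1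
  exact smul_right_injective (Fin n → ℤ) hA h2

variable {n : ℕ}


theorem mulVecLin_inj (A : Matrix (Fin n) (Fin n) ℤ) (hA : A.det ≠ 0) :
    Function.Injective A.mulVecLin := by
  intro u v huv
  have h1 : A.adjugate *ᵥ (A *ᵥ u) = A.adjugate *ᵥ (A *ᵥ v) := by
    simpa using congrArg (fun x => A.adjugate *ᵥ x) huv
  rw [Matrix.mulVec_mulVec, Matrix.mulVec_mulVec, Matrix.adjugate_mul] at h1
  have h2 : A.det • u = A.det • v := by
    simpa [Matrix.smul_mulVec, Matrix.one_mulVec] using h1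
  exact smul_right_injective (Fin n → ℤ) hA h2

noncomputable def gmap (N : Submodule ℤ (Fin n → ℤ)) (c : Module.Basis (Fin n) ℤ N) :
    (Fin n → ℤ) →ₗ[ℤ] (Fin n → ℤ) :=
  N.subtype ∘ₗ (c.equivFun.symm : (Fin n → ℤ) ≃ₗ[ℤ] N).toLinearMap

theorem gmap_det_indep (N : Submodule ℤ (Fin n → ℤ)) (c d : Module.Basis (Fin n) ℤ N) :
    (LinearMap.det (gmap N c)).natAbs = (LinearMap.det (gmap N d)).natAbs := by
  have h : gmap N d = (gmap N c) ∘ₗ (d.equivFun.symm.trans c.equivFun).toLinearMap := by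
    ext x
    simp only [gmap, LinearMap.coe_comp, Function.comp_apply, LinearEquiv.coe_coe,
      LinearEquiv.trans_apply, Submodule.coe_subtype, LinearEquiv.symm_apply_apply]
  rw [h, LinearMap.det_comp]
  have hu : IsUnit (LinearMap.det ((d.equivFun.symm.trans c.equivFun).toLinearMap)) :=
    LinearEquiv.isUnit_det' _
  rcases Int.isUnit_iff.mp hu with h1 | h1 <;> simp [Int.natAbs_mul, h1]

theorem card_coker (A : Matrix (Fin n) (Fin n) ℤ) (hA : A.det ≠ 0) :
    Nat.card ((Fin n → ℤ) ⧸ LinearMap.range A.mulVecLin) = A.det.natAbs := by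
  classical
  set N := LinearMap.range A.mulVecLin with hN
  have hinj := mulVecLin_inj A hA
  let e₀ : (Fin n → ℤ) ≃ₗ[ℤ] N := LinearEquiv.ofInjective _ hinj
  obtain ⟨m, snf⟩ := N.smithNormalForm (Pi.basisFun ℤ (Fin n))
  have hidx0 : N.toAddSubgroup.index ≠ 0 :=
    Int.submodule_toAddSubgroup_index_ne_zero_iff.mpr ⟨e₀.symm⟩
  have hm : m = n := by
    have := snf.toAddSubgroup_index_ne_zero_iff.mp hidx0
    simpa using this
  subst hm
  -- index = ∏ |a i|
  have hidx : N.toAddSubgroup.index = ∏ i, (snf.a i).natAbs := by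
    rw [snf.toAddSubgroup_index_eq_pow_mul_prod]
    simp [Ideal.span_singleton_toAddSubgroup_eq_zmultiples, Int.index_zmultiples]
  -- det of gmap with basis bA is det A
  let bA : Module.Basis (Fin m) ℤ N := (Pi.basisFun ℤ (Fin m)).map e₀
  have hgA : LinearMap.toMatrix' (gmap N bA) = A := by
    ext i j
    rw [LinearMap.toMatrix'_apply]
    have h1 : (gmap N bA) (Pi.single j 1) = (bA j : Fin m → ℤ) := by
      simp only [gmap, LinearMap.coe_comp, Function.comp_apply, LinearEquiv.coe_coe,
        Submodule.coe_subtype]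
      congr 1
      rw [Module.Basis.equivFun_symm_apply]
      simp [ite_smul, Pi.single_apply]
    rw [h1]
    have h2 : (bA j : Fin m → ℤ) = A *ᵥ (Pi.single j 1) := by
      simp only [bA, Module.Basis.map_apply, e₀]
      rw [LinearEquiv.ofInjective_apply]
      simp [Matrix.mulVecLin]
    rw [h2, Matrix.mulVec_single_one]
    rfl
  have hdetA : (LinearMap.det (gmap N bA)).natAbs = A.det.natAbs := by
    rw [← LinearMap.det_toMatrix' (gmap N bA), hgA]
  -- det of gmap with basis snf.bN is ± ∏ a i
  let eb : Module.Basis (Fin m) ℤ (Fin m → ℤ) := Pi.basisFun ℤ (Fin m)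
  have hW : LinearMap.toMatrix eb eb (gmap N snf.bN)
      = LinearMap.toMatrix snf.bM eb LinearMap.id * LinearMap.toMatrix eb snf.bM (gmap N snf.bN) := by
    rw [← LinearMap.toMatrix_comp eb snf.bM eb]
    simp
  have hUunit : IsUnit (LinearMap.toMatrix snf.bM eb (LinearMap.id : (Fin m → ℤ) →ₗ[ℤ] (Fin m → ℤ))).det := by
    apply IsUnit.of_mul_eq_one (LinearMap.toMatrix eb snf.bM LinearMap.id).det
    rw [← Matrix.det_mul, ← LinearMap.toMatrix_comp eb snf.bM eb]
    simp
  -- the middle matrix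
  set W := LinearMap.toMatrix eb snf.bM (gmap N snf.bN) with hWdef
  have hWentry : ∀ i j, W i j = if i = snf.f j then snf.a j else 0 := by
    intro i j
    rw [hWdef, LinearMap.toMatrix_apply]
    have h1 : (gmap N snf.bN) (eb j) = (snf.bN j : Fin m → ℤ) := by
      simp only [gmap, LinearMap.coe_comp, Function.comp_apply, LinearEquiv.coe_coe,
        Submodule.coe_subtype]
      congr 1
      rw [Module.Basis.equivFun_symm_apply]
      simp [eb, Pi.basisFun_apply, Pi.single_apply, ite_smul]
    rw [h1, snf.snf j, LinearEquiv.map_smul, Module.Basis.repr_self, Finsupp.smul_single]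
    simp [Finsupp.single_apply, eq_comm]
  -- compute det W up to sign
  have hbij : Function.Bijective snf.f := (Finite.injective_iff_bijective).mp snf.f.injective
  let σ : Equiv.Perm (Fin m) := Equiv.ofBijective snf.f hbij
  have hsub : W.submatrix σ id = Matrix.diagonal snf.a := by
    ext i j
    simp only [Matrix.submatrix_apply, id_eq, hWentry, Matrix.diagonal_apply]
    by_cases hij : i = j
    · subst hij
      rw [if_pos (show σ i = snf.f i from rfl), if_pos rfl]
    · rw [if_neg hij, if_neg (show ¬(σ i = snf.f j) from fun hc => hij (snf.f.injective hc))]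
  have hdetW : W.det.natAbs = ∏ i, (snf.a i).natAbs := by
    have h1 := Matrix.det_permute σ W
    rw [hsub, Matrix.det_diagonal] at h1
    have h2 := congrArg Int.natAbs h1
    rw [Int.natAbs_mul] at h2
    simp only [Int.cast_id, Int.units_natAbs, one_mul] at h2
    rw [← h2]
    exact map_prod Int.natAbsHom snf.a Finset.univ
  have hdetN : (LinearMap.det (gmap N snf.bN)).natAbs = ∏ i, (snf.a i).natAbs := by
    rw [← LinearMap.det_toMatrix eb (gmap N snf.bN), hW, Matrix.det_mul, Int.natAbs_mul,
      Int.natAbs_of_isUnit hUunit, one_mul, hdetW]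
  have hcard : Nat.card ((Fin m → ℤ) ⧸ N) = N.toAddSubgroup.index := rfl
  rw [hcard, hidx, ← hdetN, ← gmap_det_indep N bA snf.bN, hdetA]


/-! ### quotient by the column lattice -/

def qmk (A : Matrix (Fin n) (Fin n) ℤ) (x : Fin n → ℤ) :
    (Fin n → ℤ) ⧸ LinearMap.range A.mulVecLin := Submodule.Quotient.mk x

def qrep (A : Matrix (Fin n) (Fin n) ℤ)
    (q : (Fin n → ℤ) ⧸ LinearMap.range A.mulVecLin) : Fin n → ℤ :=
  (Submodule.Quotient.mk_surjective _ q).choose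

lemma qmk_qrep (A : Matrix (Fin n) (Fin n) ℤ)
    (q : (Fin n → ℤ) ⧸ LinearMap.range A.mulVecLin) : qmk A (qrep A q) = q :=
  (Submodule.Quotient.mk_surjective _ q).choose_spec

lemma qmk_eq_iff (A : Matrix (Fin n) (Fin n) ℤ) (x y : Fin n → ℤ) :
    qmk A x = qmk A y ↔ ∃ u, A.mulVec u = x - y := by
  rw [qmk, qmk, Submodule.Quotient.eq]
  constructor
  · rintro ⟨u, hu⟩
    exact ⟨u, by rw [← hu]; rfl⟩
  · rintro ⟨u, hu⟩
    exact ⟨u, by rw [← hu]; rfl⟩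

lemma qmk_add (A : Matrix (Fin n) (Fin n) ℤ) (u w : Fin n → ℤ) :
    qmk A (A.mulVec u + w) = qmk A w := by
  rw [qmk_eq_iff]
  exact ⟨u, by abel⟩

/-! ### general lemmas about foldr of tadd -/

lemma foldr_mem {Mo : Type} [AddCommMonoid Mo] {I : Set (TPoly Mo)} (hI : IsTIdeal I)
    (L : List (TPoly Mo)) (h : ∀ p ∈ L, p ∈ I) :
    L.foldr tadd (zeroPoly Mo) ∈ I := by
  induction L with
  | nil => exact hI.2.1
  | cons a L ih =>
      exact hI.2.2.1 a (h a (by simp)) _ (ih (fun p hp => h p (by simp [hp])))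

lemma foldr_apply_top {Mo : Type} [AddCommMonoid Mo] (L : List (TPoly Mo)) (x : Mo)
    (h : ∀ p ∈ L, p x = ⊤) : L.foldr tadd (zeroPoly Mo) x = ⊤ := by
  induction L with
  | nil => rfl
  | cons a L ih =>
      show min (a x) (L.foldr tadd (zeroPoly Mo) x) = ⊤
      rw [h a (by simp), ih (fun p hp => h p (by simp [hp]))]
      simp

lemma foldr_apply_val {Mo : Type} [AddCommMonoid Mo] (L : List (TPoly Mo)) (x : Mo) (t : TR)
    (hall : ∀ p ∈ L, p x = t ∨ p x = ⊤) (hex : ∃ p ∈ L, p x = t) :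
    L.foldr tadd (zeroPoly Mo) x = t := by
  induction L with
  | nil => simp at hex
  | cons a L ih =>
      show min (a x) (L.foldr tadd (zeroPoly Mo) x) = t
      rcases hall a (by simp) with ha | ha
      · rw [ha]
        by_cases hL : ∃ p ∈ L, p x = t
        · rw [ih (fun p hp => hall p (by simp [hp])) hL, min_self]
        · rw [foldr_apply_top L x ?_]
          · exact min_eq_left le_top
          · intro p hp
            rcases hall p (by simp [hp]) with h1 | h1
            · exact absurd ⟨p, hp, h1⟩ hL
            · exact h1
      · rcases hex with ⟨p, hp, hpt⟩
        rcases List.mem_cons.mp hp with rfl | hp'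
        · have ht : t = ⊤ := by rw [← hpt, ha]
          subst ht
          rw [ha, foldr_apply_top L x ?_]
          · simp
          · intro q hq
            rcases hall q (by simp [hq]) with h1 | h1 <;> exact h1
        · rw [ha, ih (fun q hq => hall q (by simp [hq])) ⟨p, hp', hpt⟩]
          exact min_eq_right le_top

lemma tmul_eq {G : Type} [AddCommGroup G] (c : TR) (v : G) (f : TPoly G) :
    tmulTerm c v f = fun u => c + f (u - v) := by
  funext u
  have h : ∃ t : G, t + v = u := ⟨u - v, sub_add_cancel u v⟩
  show (if h : ∃ t : G, t + v = u then c + f h.choose else ⊤) = c + f (u - v)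
  rw [dif_pos h]
  exact congrArg (fun z => c + f z) (eq_sub_of_add_eq h.choose_spec)


section Main

variable {n : ℕ} {A : Matrix (Fin n) (Fin n) ℤ}

/-- Coefficients of `g` along the coset of `w`, as a polynomial. -/
def comp (A : Matrix (Fin n) (Fin n) ℤ) (g : TPoly (Fin n → ℤ)) (w : Fin n → ℤ) :
    TPoly (Fin n → ℤ) := fun u => g (A.mulVec u + w)

/-- Candidate for the generated ideal. -/
def Kset (A : Matrix (Fin n) (Fin n) ℤ) (J : Set (TPoly (Fin n → ℤ))) :
    Set (TPoly (Fin n → ℤ)) := {g | ∀ w, comp A g w ∈ J}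

variable (hinj : Function.Injective A.mulVec)

include hinj in
lemma phi_apply_mul (f : TPoly (Fin n → ℤ)) (u : Fin n → ℤ) :
    phiMap A f (A.mulVec u) = f u := by
  have h : ∃ t, A.mulVec t = A.mulVec u := ⟨u, rfl⟩
  show (if h : ∃ t, A.mulVec t = A.mulVec u then f h.choose else ⊤) = f u
  rw [dif_pos h]
  exact congrArg f (hinj h.choose_spec)

lemma phi_apply_not (f : TPoly (Fin n → ℤ)) (v : Fin n → ℤ)
    (h : ¬ ∃ u, A.mulVec u = v) : phiMap A f v = ⊤ := dif_neg h

section WithIdeal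

variable {J : Set (TPoly (Fin n → ℤ))} (hJ : IsTropIdeal J)

include hJ

lemma shift_memJ {f : TPoly (Fin n → ℤ)} (hf : f ∈ J) (v : Fin n → ℤ) :
    (fun u => f (u + v)) ∈ J := by
  have h := hJ.1.2.2.2 f hf 0 (-v)
  rw [tmul_eq] at h
  simpa [sub_neg_eq_add] using h

include hinj in
lemma comp_phi {f : TPoly (Fin n → ℤ)} (hf : f ∈ J) (w : Fin n → ℤ) :
    comp A (phiMap A f) w ∈ J := by
  by_cases h : ∃ u₀, A.mulVec u₀ = w
  · obtain ⟨u₀, rfl⟩ := h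
    have he : comp A (phiMap A f) (A.mulVec u₀) = fun u => f (u + u₀) := by
      funext u
      show phiMap A f (A.mulVec u + A.mulVec u₀) = f (u + u₀)
      rw [← Matrix.mulVec_add, phi_apply_mul hinj]
    rw [he]
    exact shift_memJ hJ hf u₀
  · have he : comp A (phiMap A f) w = zeroPoly _ := by
      funext u
      show phiMap A f (A.mulVec u + w) = ⊤
      refine phi_apply_not _ _ ?_
      rintro ⟨t, ht⟩
      exact h ⟨t - u, by rw [Matrix.mulVec_sub, ht]; abel⟩
    rw [he]
    exact hJ.1.2.1

include hinj in
lemma phi_image_subset_K : phiMap A '' J ⊆ Kset A J := by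
  rintro g ⟨f, hf, rfl⟩ w
  exact comp_phi hinj hJ hf w

omit hJ in
lemma comp_tadd (f g : TPoly (Fin n → ℤ)) (w : Fin n → ℤ) :
    comp A (tadd f g) w = tadd (comp A f w) (comp A g w) := rfl

omit hJ in
lemma comp_tmul (c : TR) (v : Fin n → ℤ) (g : TPoly (Fin n → ℤ)) (w : Fin n → ℤ) :
    comp A (tmulTerm c v g) w = tmulTerm c 0 (comp A g (w - v)) := by
  funext u
  rw [tmul_eq, tmul_eq]
  show c + g (A.mulVec u + w - v) = c + comp A g (w - v) (u - 0)
  rw [sub_zero]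
  show c + g (A.mulVec u + w - v) = c + g (A.mulVec u + (w - v))
  rw [add_sub_assoc]

include hJ in
lemma K_supp_fin (hA : A.det ≠ 0) {g : TPoly (Fin n → ℤ)} (hg : g ∈ Kset A J) :
    (psupp g).Finite := by
  have hfinQ : Finite ((Fin n → ℤ) ⧸ LinearMap.range A.mulVecLin) :=
    Nat.finite_of_card_ne_zero (by rw [card_coker A hA]; simpa using hA)
  have hsub : psupp g ⊆ ⋃ q : (Fin n → ℤ) ⧸ LinearMap.range A.mulVecLin,
      (fun u => A.mulVec u + qrep A q) '' psupp (comp A g (qrep A q)) := by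
    intro x hx
    have h1 : qmk A x = qmk A (qrep A (qmk A x)) := (qmk_qrep A (qmk A x)).symm
    obtain ⟨u, hu⟩ := (qmk_eq_iff A x _).mp h1
    refine Set.mem_iUnion.mpr ⟨qmk A x, ⟨u, ?_, ?_⟩⟩
    · show g (A.mulVec u + qrep A (qmk A x)) ≠ ⊤
      rw [hu, sub_add_cancel]
      exact hx
    · show A.mulVec u + qrep A (qmk A x) = x
      rw [hu, sub_add_cancel]
  exact Set.Finite.subset
    (Set.finite_iUnion (fun q => (hJ.1.1 _ (hg (qrep A q))).image _)) hsub

include hJ in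
lemma K_isTIdeal (hA : A.det ≠ 0) : IsTIdeal (Kset A J) := by
  refine ⟨fun g hg => K_supp_fin hJ hA hg, fun w => hJ.1.2.1, ?_, ?_⟩
  · intro f hf g hg w
    rw [comp_tadd]
    exact hJ.1.2.2.1 _ (hf w) _ (hg w)
  · intro f hf c v w
    rw [comp_tmul]
    exact hJ.1.2.2.2 _ (hf (w - v)) c 0

include hinj hJ in
lemma gen_eq (hA : A.det ≠ 0) : idealGen (phiMap A '' J) = Kset A J := by
  apply subset_antisymm
  · exact Set.sInter_subset_of_mem ⟨K_isTIdeal hJ hA, phi_image_subset_K hinj hJ⟩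
  · intro g hg I hI
    obtain ⟨hI1, hI2⟩ := hI
    have hgK : g ∈ Kset A J := hg
    have hfin := K_supp_fin hJ hA hgK
    set F : (Fin n → ℤ) → TPoly (Fin n → ℤ) :=
      fun w => tmulTerm 0 w (phiMap A (comp A g w)) with hF
    have hFI : ∀ w, F w ∈ I := fun w => hI1.2.2.2 _ (hI2 ⟨comp A g w, hgK w, rfl⟩) 0 w
    have hFpos : ∀ w x (u : Fin n → ℤ), A.mulVec u = x - w → F w x = g x := by
      intro w x u hu
      rw [hF]
      simp only [tmul_eq]
      rw [← hu, phi_apply_mul hinj]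
      show 0 + comp A g w u = g x
      rw [zero_add]
      show g (A.mulVec u + w) = g x
      rw [hu, sub_add_cancel]
    have hFneg : ∀ w x, (¬ ∃ u, A.mulVec u = x - w) → F w x = ⊤ := by
      intro w x h
      rw [hF]
      simp only [tmul_eq]
      rw [phi_apply_not _ _ h]
      simp
    have hFval : ∀ w x, F w x = g x ∨ F w x = ⊤ := by
      intro w x
      by_cases h : ∃ u, A.mulVec u = x - w
      · exact Or.inl (hFpos w x h.choose h.choose_spec)
      · exact Or.inr (hFneg w x h)
    have hFself : ∀ x, F x x = g x := by
      intro x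
      exact hFpos x x 0 (by rw [Matrix.mulVec_zero, sub_self])
    have hkey : (hfin.toFinset.toList.map F).foldr tadd (zeroPoly _) = g := by
      funext x
      by_cases hx : g x = ⊤
      · rw [foldr_apply_top _ x, hx]
        intro p hp
        obtain ⟨w, _, rfl⟩ := List.mem_map.mp hp
        rcases hFval w x with h | h
        · rw [h, hx]
        · exact h
      · refine foldr_apply_val _ x (g x) ?_ ?_
        · intro p hp
          obtain ⟨w, _, rfl⟩ := List.mem_map.mp hp
          exact hFval w x
        · refine ⟨F x, List.mem_map.mpr ⟨x, ?_, rfl⟩, hFself x⟩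
          rw [Finset.mem_toList, Set.Finite.mem_toFinset]
          exact hx
    rw [← hkey]
    refine foldr_mem hI1 _ ?_
    intro p hp
    obtain ⟨w, _, rfl⟩ := List.mem_map.mp hp
    exact hFI w

include hinj hJ in
lemma K_elim (hA : A.det ≠ 0) : ∀ f ∈ Kset A J, ∀ g ∈ Kset A J, ∀ u : Fin n → ℤ,
    f u = g u → f u ≠ ⊤ → ∃ h ∈ Kset A J, Elim h f g u := by
  intro f hf g hg u hfg hne
  have hcf : comp A f u 0 = f u := by
    show f (A.mulVec 0 + u) = f u
    rw [Matrix.mulVec_zero, zero_add]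
  have hcg : comp A g u 0 = g u := by
    show g (A.mulVec 0 + u) = g u
    rw [Matrix.mulVec_zero, zero_add]
  obtain ⟨h₀, hh₀J, hE⟩ := hJ.2 _ (hf u) _ (hg u) 0
    (by rw [hcf, hcg, hfg]) (by rw [hcf]; exact hne)
  set H : TPoly (Fin n → ℤ) :=
    fun x => if h : ∃ t, A.mulVec t + u = x then h₀ h.choose else min (f x) (g x) with hH
  have hchoose : ∀ (x : Fin n → ℤ) (h : ∃ t, A.mulVec t + u = x) (t : Fin n → ℤ),
      A.mulVec t + u = x → h.choose = t := by
    intro x h t ht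
    apply hinj
    have h1 := h.choose_spec
    have h2 : A.mulVec h.choose + u = A.mulVec t + u := by rw [h1, ht]
    exact add_right_cancel h2
  refine ⟨H, ?_, ?_, ?_⟩
  · intro w
    by_cases hw : ∃ v, A.mulVec v + u = w
    · obtain ⟨v, hv⟩ := hw
      have he : comp A H w = fun u' => h₀ (u' + v) := by
        funext u'
        show H (A.mulVec u' + w) = h₀ (u' + v)
        have hex : ∃ t, A.mulVec t + u = A.mulVec u' + w :=
          ⟨u' + v, by rw [Matrix.mulVec_add, add_assoc, hv]⟩
        simp only [hH]
        rw [dif_pos hex,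
          hchoose _ hex (u' + v) (by rw [Matrix.mulVec_add, add_assoc, hv])]
      rw [he]
      exact shift_memJ hJ hh₀J v
    · have he : comp A H w = tadd (comp A f w) (comp A g w) := by
        funext u'
        show H (A.mulVec u' + w) = _
        have hnex : ¬ ∃ t, A.mulVec t + u = A.mulVec u' + w := by
          rintro ⟨t, ht⟩
          refine hw ⟨t - u', ?_⟩
          rw [Matrix.mulVec_sub]
          have : A.mulVec t + u - A.mulVec u' = w := by rw [ht]; abel
          rw [← this]; abel
        simp only [hH]
        rw [dif_neg hnex]
        rfl
      rw [he]
      exact hJ.1.2.2.1 _ (hf w) _ (hg w)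
  · have hex : ∃ t, A.mulVec t + u = u := ⟨0, by rw [Matrix.mulVec_zero, zero_add]⟩
    show H u = ⊤
    simp only [hH]
    rw [dif_pos hex, hchoose _ hex 0 (by rw [Matrix.mulVec_zero, zero_add])]
    exact hE.1
  · intro v
    by_cases hv : ∃ t, A.mulVec t + u = v
    · obtain ⟨t, ht⟩ := hv
      have hfv : f v = comp A f u t := by
        show f v = f (A.mulVec t + u)
        rw [ht]
      have hgv : g v = comp A g u t := by
        show g v = g (A.mulVec t + u)
        rw [ht]
      have hHv : H v = h₀ t := by
        simp only [hH]
        rw [dif_pos ⟨t, ht⟩, hchoose _ ⟨t, ht⟩ t ht]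
      rw [hHv, hfv, hgv]
      exact hE.2 t
    · have hHv : H v = min (f v) (g v) := by
        simp only [hH]
        rw [dif_neg hv]
      rw [hHv]
      exact ⟨le_refl _, fun _ => rfl⟩

def Epull (hinj : Function.Injective A.mulVec) (E : Finset (Fin n → ℤ)) (w : Fin n → ℤ) :
    Finset (Fin n → ℤ) :=
  E.preimage (fun u => A.mulVec u + w)
    (fun a _ b _ hab => hinj (add_right_cancel hab))

omit hJ in
lemma mem_Epull {hinj : Function.Injective A.mulVec} {E : Finset (Fin n → ℤ)}
    {w u : Fin n → ℤ} : u ∈ Epull hinj E w ↔ A.mulVec u + w ∈ E :=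
  Finset.mem_preimage

include hinj hJ in
lemma pull_indep (hA : A.det ≠ 0) {E : Finset (Fin n → ℤ)}
    (hK : LindepFinset (Kset A J) E) (w : Fin n → ℤ) :
    LindepFinset J (Epull hinj E w) := by
  rintro f hfJ ⟨u₀, hu₀⟩ hsub
  set g := tmulTerm 0 w (phiMap A f) with hgdef
  have hφK : phiMap A f ∈ Kset A J := fun w' => comp_phi hinj hJ hfJ w'
  have hgK : g ∈ Kset A J := (K_isTIdeal hJ hA).2.2.2 _ hφK 0 w
  have hgval : ∀ u : Fin n → ℤ, g (A.mulVec u + w) = f u := by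
    intro u
    rw [hgdef, tmul_eq]
    show (0 : TR) + phiMap A f (A.mulVec u + w - w) = f u
    rw [add_sub_cancel_right, phi_apply_mul hinj, zero_add]
  refine hK g hgK ⟨A.mulVec u₀ + w, by rw [hgval]; exact hu₀⟩ ?_
  intro x hx
  have hφx : phiMap A f (x - w) ≠ ⊤ := by
    intro hc
    apply hx
    rw [hgdef, tmul_eq]
    show (0 : TR) + phiMap A f (x - w) = ⊤
    rw [hc]
    simp
  have hex : ∃ u, A.mulVec u = x - w := by
    by_contra hc
    exact hφx (phi_apply_not _ _ hc)
  obtain ⟨u, hu⟩ := hex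
  have hfu : f u ≠ ⊤ := by
    rw [← phi_apply_mul hinj f u, hu]
    exact hφx
  have huE : u ∈ Epull hinj E w := hsub hfu
  have : A.mulVec u + w ∈ E := mem_Epull.mp huE
  have hxeq : A.mulVec u + w = x := by rw [hu, sub_add_cancel]
  rwa [hxeq] at this

include hinj hJ in
lemma upper_bound (hA : A.det ≠ 0) {B : ℕ}
    (HB : ∀ E' : Finset (Fin n → ℤ), LindepFinset J E' → E'.card ≤ B) :
    ∀ E : Finset (Fin n → ℤ), LindepFinset (Kset A J) E → E.card ≤ A.det.natAbs * B := by
  intro E hE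
  have hfinQ : Finite ((Fin n → ℤ) ⧸ LinearMap.range A.mulVecLin) :=
    Nat.finite_of_card_ne_zero (by rw [card_coker A hA]; simpa using hA)
  have : Fintype ((Fin n → ℤ) ⧸ LinearMap.range A.mulVecLin) := Fintype.ofFinite _
  rw [Finset.card_eq_sum_card_fiberwise
    (f := fun x => qmk A x) (t := Finset.univ) (fun x _ => Finset.mem_univ _)]
  have hle : ∀ q : (Fin n → ℤ) ⧸ LinearMap.range A.mulVecLin,
      (E.filter (fun x => qmk A x = q)).card ≤ B := by
    intro q
    have heq : E.filter (fun x => qmk A x = q)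
        = (Epull hinj E (qrep A q)).image (fun u => A.mulVec u + qrep A q) := by
      ext x
      simp only [Finset.mem_filter, Finset.mem_image]
      constructor
      · rintro ⟨hxE, hxq⟩
        have h1 : qmk A x = qmk A (qrep A q) := by rw [hxq, qmk_qrep]
        obtain ⟨u, hu⟩ := (qmk_eq_iff A x _).mp h1
        have hxeq : A.mulVec u + qrep A q = x := by rw [hu, sub_add_cancel]
        exact ⟨u, mem_Epull.mpr (by rw [hxeq]; exact hxE), hxeq⟩
      · rintro ⟨u, hu, rfl⟩
        exact ⟨mem_Epull.mp hu, by rw [qmk_add, qmk_qrep]⟩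
    rw [heq, Finset.card_image_of_injective _
      (fun a b hab => hinj (add_right_cancel hab))]
    exact HB _ (pull_indep hinj hJ hA hE (qrep A q))
  calc ∑ q, (E.filter (fun x => qmk A x = q)).card
      ≤ ∑ _q : (Fin n → ℤ) ⧸ LinearMap.range A.mulVecLin, B :=
        Finset.sum_le_sum (fun q _ => hle q)
    _ = Fintype.card ((Fin n → ℤ) ⧸ LinearMap.range A.mulVecLin) * B := by
        rw [Finset.sum_const, smul_eq_mul, Finset.card_univ]
    _ = A.det.natAbs * B := by rw [← Nat.card_eq_fintype_card, card_coker A hA]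

include hinj hJ in
lemma lower_bound (hA : A.det ≠ 0) {EJ : Finset (Fin n → ℤ)} (hEJ : LindepFinset J EJ) :
    ∃ E : Finset (Fin n → ℤ), LindepFinset (Kset A J) E ∧ E.card = A.det.natAbs * EJ.card := by
  have hfinQ : Finite ((Fin n → ℤ) ⧸ LinearMap.range A.mulVecLin) :=
    Nat.finite_of_card_ne_zero (by rw [card_coker A hA]; simpa using hA)
  have : Fintype ((Fin n → ℤ) ⧸ LinearMap.range A.mulVecLin) := Fintype.ofFinite _
  set E := (EJ ×ˢ (Finset.univ : Finset ((Fin n → ℤ) ⧸ LinearMap.range A.mulVecLin))).image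
    (fun p => A.mulVec p.1 + qrep A p.2) with hEdef
  have hinj2 : Function.Injective
      (fun p : (Fin n → ℤ) × ((Fin n → ℤ) ⧸ LinearMap.range A.mulVecLin) =>
        A.mulVec p.1 + qrep A p.2) := by
    rintro ⟨u, q⟩ ⟨u', q'⟩ h
    simp only at h
    have hq : q = q' := by
      have h2 := congrArg (qmk A) h
      rwa [qmk_add, qmk_add, qmk_qrep, qmk_qrep] at h2
    subst hq
    have hu : u = u' := hinj (add_right_cancel h)
    rw [hu]
  refine ⟨E, ?_, ?_⟩
  · rintro g hgK ⟨x₀, hx₀⟩ hsub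
    have hx₀E : x₀ ∈ E := hsub hx₀
    obtain ⟨⟨e₀, q₀⟩, hmem, hx₀eq⟩ := Finset.mem_image.mp hx₀E
    have he₀ : e₀ ∈ EJ := (Finset.mem_product.mp hmem).1
    set f' := tmulTerm 0 e₀ (comp A g x₀) with hf'def
    have hf'J : f' ∈ J := hJ.1.2.2.2 _ (hgK x₀) 0 e₀
    have hf'val : ∀ u : Fin n → ℤ, f' u = g (A.mulVec (u - e₀) + x₀) := by
      intro u
      rw [hf'def, tmul_eq]
      show (0 : TR) + comp A g x₀ (u - e₀) = _
      rw [zero_add]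
      rfl
    refine hEJ f' hf'J ⟨e₀, ?_⟩ ?_
    · rw [hf'val, sub_self, Matrix.mulVec_zero, zero_add]
      exact hx₀
    · intro u hu
      have hgne : g (A.mulVec (u - e₀) + x₀) ≠ ⊤ := by rw [← hf'val]; exact hu
      have hmemE : A.mulVec (u - e₀) + x₀ ∈ E := hsub hgne
      obtain ⟨⟨e, q⟩, hmem2, heq2⟩ := Finset.mem_image.mp hmemE
      have he : e ∈ EJ := (Finset.mem_product.mp hmem2).1
      have hcomb : A.mulVec (u - e₀) + x₀ = A.mulVec u + qrep A q₀ := by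
        rw [← hx₀eq]
        show A.mulVec (u - e₀) + (A.mulVec e₀ + qrep A q₀) = _
        rw [← add_assoc, ← Matrix.mulVec_add, sub_add_cancel]
      rw [hcomb] at heq2
      have hpair : (e, q) = (u, q₀) := hinj2 heq2
      have hue : e = u := congrArg Prod.fst hpair
      rw [← hue]
      exact he
  · rw [hEdef, Finset.card_image_of_injective _ hinj2, Finset.card_product,
      Finset.card_univ, ← Nat.card_eq_fintype_card, card_coker A hA, mul_comm]

end WithIdeal

end Main

end TropAux

theorem monomial_map_image_isTropicalIdeal_and_degree
    (n : ℕ) (A : Matrix (Fin n) (Fin n) ℤ) (hA : A.det ≠ 0)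
    (J : Set (TropStmt.TPoly (Fin n → ℤ))) (hJ : TropStmt.IsTropIdeal J)
    (hz : TropStmt.IsZeroDimL J) :
    TropStmt.IsTropIdeal (TropStmt.idealGen (TropStmt.phiMap A '' J)) ∧
    TropStmt.IsZeroDimL (TropStmt.idealGen (TropStmt.phiMap A '' J)) ∧
    ∀ dJ : ℕ, TropStmt.LdegIs J dJ →
      TropStmt.LdegIs (TropStmt.idealGen (TropStmt.phiMap A '' J)) (A.det.natAbs * dJ) := by
  classical
  have hinj : Function.Injective A.mulVec := TropAux.mulVec_inj A hA
  have hgen := TropAux.gen_eq hinj hJ hA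
  rw [hgen]
  refine ⟨⟨TropAux.K_isTIdeal hJ hA, TropAux.K_elim hinj hJ hA⟩, ?_, ?_⟩
  · obtain ⟨B, hB⟩ := hz
    exact ⟨A.det.natAbs * B, TropAux.upper_bound hinj hJ hA hB⟩
  · intro dJ hdJ
    obtain ⟨⟨EJ, hEJ, hcard⟩, hub⟩ := hdJ
    obtain ⟨E, hE, hcardE⟩ := TropAux.lower_bound hinj hJ hA hEJ
    exact ⟨⟨E, hE, by rw [hcardE, hcard]⟩, TropAux.upper_bound hinj hJ hA hub⟩
end
end
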